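/- arXiv:2202.05076 — 4 statements merged into one kernel-verified Lean document; each statement's English description precedes it below -/
import Mathlib

section
/- Let γ∈(0,1/2). For all 0≤s<t<τ, ∫_s^t (τ−r)^{−2γ}(r−s)^{1−2γ} dr ≤ C · min( (τ−t)^{−2γ}(t−s)^{2−2γ}, (t−s)^{2−4γ} ), with C depending only on γ. -/
open MeasureTheory Real

lemma aux_rpow_subadd (a b p : ℝ) (ha : 0 ≤ a) (hb : 0 ≤ b) (hp : 0 ≤ p) (hp1 : p ≤ 1) :
    (a + b) ^ p ≤ a ^ p + b ^ p := by
  rw [← Real.coe_toNNReal a ha, ← Real.coe_toNNReal b hb, ← NNReal.coe_add,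
    ← NNReal.coe_rpow, ← NNReal.coe_rpow, ← NNReal.coe_rpow, ← NNReal.coe_add, NNReal.coe_le_coe]
  exact NNReal.rpow_add_le_add_rpow _ _ hp hp1

theorem stmt_4 (γ : ℝ) (hγ0 : 0 < γ) (hγ : γ < 1/2) :
    ∃ C > 0, ∀ s t τ : ℝ, 0 ≤ s → s < t → t < τ →
      (∫ r in s..t, (τ - r) ^ (-(2*γ)) * (r - s) ^ (1 - 2*γ))
        ≤ C * min ((τ - t) ^ (-(2*γ)) * (t - s) ^ (2 - 2*γ)) ((t - s) ^ (2 - 4*γ)) := by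
  have h1 : 0 < 1 - 2*γ := by linarith
  have h2 : 0 < 2 - 2*γ := by linarith
  have h4 : 0 < 2 - 4*γ := by linarith
  refine ⟨1/(2-2*γ) + 1/(1-2*γ), by positivity, ?_⟩
  intro s t τ hs hst htτ
  set m : ℝ := (s + t) / 2 with hm
  have hsm : s < m := by simp only [hm]; linarith
  have hmt : m < t := by simp only [hm]; linarith
  have hts : 0 < t - s := by linarith
  have hτt : 0 < τ - t := by linarith
  -- continuity of the integrand on [s,t]
  have hcont : ContinuousOn (fun r => (τ - r) ^ (-(2*γ)) * (r - s) ^ (1 - 2*γ)) (Set.Icc s t) := by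
    apply ContinuousOn.mul
    · exact ((continuousOn_const.sub continuousOn_id).rpow_const
        fun x hx => Or.inl (by simp only [Pi.sub_apply, id_eq, ne_eq]; rcases hx with ⟨_, hx2⟩; intro h; linarith))
    · exact ((continuousOn_id.sub continuousOn_const).rpow_const fun x hx => Or.inr h1.le)
  have hintf : ∀ a b : ℝ, s ≤ a → a ≤ b → b ≤ t →
      IntervalIntegrable (fun r => (τ - r) ^ (-(2*γ)) * (r - s) ^ (1 - 2*γ)) volume a b := by
    intro a b hsa hab hbt
    apply (hcont.mono ?_).intervalIntegrable
    rw [Set.uIcc_of_le hab]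
    exact Set.Icc_subset_Icc hsa hbt
  -- auxiliary: ∫ (r-s)^(1-2γ) over a..b
  have hpow1 : ∀ b : ℝ, (∫ r in s..b, (r - s) ^ (1 - 2*γ)) = (b - s) ^ (2 - 2*γ) / (2 - 2*γ) := by
    intro b
    have := intervalIntegral.integral_comp_sub_right (a := s) (b := b)
      (fun u => u ^ (1 - 2*γ)) s
    rw [this, sub_self, integral_rpow (Or.inl (by linarith))]
    rw [Real.zero_rpow (by linarith)]
    norm_num
    rw [show 1 - 2*γ + 1 = 2 - 2*γ by ring]
  -- Bound A
  have boundA : (∫ r in s..t, (τ - r) ^ (-(2*γ)) * (r - s) ^ (1 - 2*γ))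
      ≤ (τ - t) ^ (-(2*γ)) * ((t - s) ^ (2 - 2*γ) / (2 - 2*γ)) := by
    have step : (∫ r in s..t, (τ - r) ^ (-(2*γ)) * (r - s) ^ (1 - 2*γ))
        ≤ ∫ r in s..t, (τ - t) ^ (-(2*γ)) * (r - s) ^ (1 - 2*γ) := by
      apply intervalIntegral.integral_mono_on hst.le (hintf s t le_rfl hst.le le_rfl)
      · apply ContinuousOn.intervalIntegrable
        apply ContinuousOn.mul continuousOn_const
        exact (continuousOn_id.sub continuousOn_const).rpow_const fun x hx => Or.inr h1.le
      · intro x hx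
        apply mul_le_mul_of_nonneg_right
        · exact Real.rpow_le_rpow_of_nonpos hτt (by linarith [hx.2]) (by linarith)
        · exact Real.rpow_nonneg (by linarith [hx.1]) _
    calc _ ≤ ∫ r in s..t, (τ - t) ^ (-(2*γ)) * (r - s) ^ (1 - 2*γ) := step
      _ = (τ - t) ^ (-(2*γ)) * ∫ r in s..t, (r - s) ^ (1 - 2*γ) :=
          intervalIntegral.integral_const_mul _ _
      _ = _ := by rw [hpow1 t]
  -- Bound B : split at m
  have hsplit : (∫ r in s..t, (τ - r) ^ (-(2*γ)) * (r - s) ^ (1 - 2*γ))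
      = (∫ r in s..m, (τ - r) ^ (-(2*γ)) * (r - s) ^ (1 - 2*γ))
      + ∫ r in m..t, (τ - r) ^ (-(2*γ)) * (r - s) ^ (1 - 2*γ) :=
    (intervalIntegral.integral_add_adjacent_intervals
      (hintf s m le_rfl hsm.le hmt.le) (hintf m t hsm.le hmt.le le_rfl)).symm
  -- first piece
  have piece1 : (∫ r in s..m, (τ - r) ^ (-(2*γ)) * (r - s) ^ (1 - 2*γ))
      ≤ (t - s) ^ (2 - 4*γ) / (2 - 2*γ) := by
    have step : (∫ r in s..m, (τ - r) ^ (-(2*γ)) * (r - s) ^ (1 - 2*γ))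
        ≤ ∫ r in s..m, ((t-s)/2) ^ (-(2*γ)) * (r - s) ^ (1 - 2*γ) := by
      apply intervalIntegral.integral_mono_on hsm.le (hintf s m le_rfl hsm.le hmt.le)
      · apply ContinuousOn.intervalIntegrable
        apply ContinuousOn.mul continuousOn_const
        exact (continuousOn_id.sub continuousOn_const).rpow_const fun x hx => Or.inr h1.le
      · intro x hx
        apply mul_le_mul_of_nonneg_right
        · apply Real.rpow_le_rpow_of_nonpos (by linarith) ?_ (by linarith)
          have := hx.2
          simp only [hm] at *
          linarith
        · exact Real.rpow_nonneg (by linarith [hx.1]) _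
    have hms : m - s = (t-s)/2 := by simp only [hm]; ring
    calc _ ≤ ∫ r in s..m, ((t-s)/2) ^ (-(2*γ)) * (r - s) ^ (1 - 2*γ) := step
      _ = ((t-s)/2) ^ (-(2*γ)) * (((t-s)/2) ^ (2 - 2*γ) / (2 - 2*γ)) := by
          rw [intervalIntegral.integral_const_mul, hpow1 m, hms]
      _ = ((t-s)/2) ^ (2 - 4*γ) / (2 - 2*γ) := by
          rw [mul_div_assoc', ← Real.rpow_add (by linarith), show -(2*γ) + (2 - 2*γ) = 2 - 4*γ by ring]
      _ ≤ (t - s) ^ (2 - 4*γ) / (2 - 2*γ) := by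
          exact (div_le_div_iff_of_pos_right h2).mpr (Real.rpow_le_rpow (by linarith) (by linarith) h4.le)
  -- second piece
  have piece2 : (∫ r in m..t, (τ - r) ^ (-(2*γ)) * (r - s) ^ (1 - 2*γ))
      ≤ (t - s) ^ (2 - 4*γ) / (1 - 2*γ) := by
    have step : (∫ r in m..t, (τ - r) ^ (-(2*γ)) * (r - s) ^ (1 - 2*γ))
        ≤ ∫ r in m..t, (τ - r) ^ (-(2*γ)) * (t - s) ^ (1 - 2*γ) := by
      apply intervalIntegral.integral_mono_on hmt.le (hintf m t hsm.le hmt.le le_rfl)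
      · apply ContinuousOn.intervalIntegrable
        apply ContinuousOn.mul ?_ continuousOn_const
        apply (continuousOn_const.sub continuousOn_id).rpow_const
        intro x hx
        rw [Set.uIcc_of_le hmt.le] at hx
        exact Or.inl (by simp only [Pi.sub_apply, id_eq, ne_eq]; intro h; have := hx.2; linarith)
      · intro x hx
        apply mul_le_mul_of_nonneg_left
        · exact Real.rpow_le_rpow (by linarith [hx.1]) (by linarith [hx.2]) h1.le
        · exact Real.rpow_nonneg (by linarith [hx.2]) _
    have hcomp : (∫ r in m..t, (τ - r) ^ (-(2*γ)))
        = ((τ - m) ^ (1 - 2*γ) - (τ - t) ^ (1 - 2*γ)) / (1 - 2*γ) := by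
      have := intervalIntegral.integral_comp_sub_left (a := m) (b := t)
        (fun u => u ^ (-(2*γ))) τ
      rw [this, integral_rpow (Or.inl (by linarith))]
      rw [show -(2*γ) + 1 = 1 - 2*γ by ring]
    have hsub : (τ - m) ^ (1 - 2*γ) - (τ - t) ^ (1 - 2*γ) ≤ (t - s) ^ (1 - 2*γ) := by
      have h := aux_rpow_subadd (τ - t) (t - m) (1 - 2*γ) hτt.le (by linarith) h1.le
        (by linarith)
      rw [show τ - t + (t - m) = τ - m by ring] at h
      have h2' : (t - m) ^ (1 - 2*γ) ≤ (t - s) ^ (1 - 2*γ) :=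
        Real.rpow_le_rpow (by linarith) (by linarith) h1.le
      linarith
    calc _ ≤ ∫ r in m..t, (τ - r) ^ (-(2*γ)) * (t - s) ^ (1 - 2*γ) := step
      _ = (∫ r in m..t, (τ - r) ^ (-(2*γ))) * (t - s) ^ (1 - 2*γ) :=
          intervalIntegral.integral_mul_const _ _
      _ = ((τ - m) ^ (1 - 2*γ) - (τ - t) ^ (1 - 2*γ)) / (1 - 2*γ) * (t - s) ^ (1 - 2*γ) := by
          rw [hcomp]
      _ ≤ (t - s) ^ (1 - 2*γ) / (1 - 2*γ) * (t - s) ^ (1 - 2*γ) := by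
          apply mul_le_mul_of_nonneg_right ?_ (Real.rpow_nonneg hts.le _)
          exact (div_le_div_iff_of_pos_right h1).mpr hsub
      _ = (t - s) ^ (2 - 4*γ) / (1 - 2*γ) := by
          rw [div_mul_eq_mul_div, ← Real.rpow_add hts,
            show 1 - 2*γ + (1 - 2*γ) = 2 - 4*γ by ring]
  have boundB : (∫ r in s..t, (τ - r) ^ (-(2*γ)) * (r - s) ^ (1 - 2*γ))
      ≤ (1/(2-2*γ) + 1/(1-2*γ)) * (t - s) ^ (2 - 4*γ) := by
    rw [hsplit]
    calc _ ≤ (t - s) ^ (2 - 4*γ) / (2 - 2*γ) + (t - s) ^ (2 - 4*γ) / (1 - 2*γ) :=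
          add_le_add piece1 piece2
      _ = _ := by ring
  have boundA' : (∫ r in s..t, (τ - r) ^ (-(2*γ)) * (r - s) ^ (1 - 2*γ))
      ≤ (1/(2-2*γ) + 1/(1-2*γ)) * ((τ - t) ^ (-(2*γ)) * (t - s) ^ (2 - 2*γ)) := by
    refine boundA.trans ?_
    have hnn : 0 ≤ (τ - t) ^ (-(2*γ)) * (t - s) ^ (2 - 2*γ) :=
      mul_nonneg (Real.rpow_nonneg hτt.le _) (Real.rpow_nonneg hts.le _)
    calc (τ - t) ^ (-(2*γ)) * ((t - s) ^ (2 - 2*γ) / (2 - 2*γ))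
        = (1/(2-2*γ)) * ((τ - t) ^ (-(2*γ)) * (t - s) ^ (2 - 2*γ)) := by ring
      _ ≤ _ := by
          apply mul_le_mul_of_nonneg_right ?_ hnn
          have : 0 < 1/(1-2*γ) := by positivity
          linarith
  rcases le_total ((τ - t) ^ (-(2*γ)) * (t - s) ^ (2 - 2*γ)) ((t - s) ^ (2 - 4*γ)) with h | h
  · rw [min_eq_left h]; exact boundA'
  · rw [min_eq_right h]; exact boundB
end

section
/- Let H∈(1/2,1), γ∈(0,2H−1), and a_H = H(2H−1). Then for 0≤s<t<τ, E[(z^{1,τ}_{ts})^2] := a_H ∫_s^t ∫_s^t (τ−r)^{−γ}(τ−l)^{−γ}|r−l|^{2H−2} dr dl ≤ C · min( (τ−t)^{−2γ}(t−s)^{2H}, (t−s)^{2H−2γ} ), where C depends only on H and γ. -/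
open MeasureTheory Real Set intervalIntegral


lemma hII_left {q : ℝ} (hq : -1 < q) (c a b : ℝ) :
    IntervalIntegrable (fun l : ℝ => (c - l) ^ q) volume a b := by
  have h := (intervalIntegrable_rpow' (a := c - a) (b := c - b) hq).comp_sub_left c
  simpa using h

lemma hII_right {q : ℝ} (hq : -1 < q) (c a b : ℝ) :
    IntervalIntegrable (fun l : ℝ => (l - c) ^ q) volume a b := by
  have h := (intervalIntegrable_rpow' (a := a - c) (b := b - c) hq).comp_sub_right c
  simpa using h

lemma hval_left {q : ℝ} (hq : -1 < q) (c a : ℝ) :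
    ∫ l in a..c, (c - l) ^ q = (c - a) ^ (q+1) / (q+1) := by
  rw [intervalIntegral.integral_comp_sub_left (fun x : ℝ => x ^ q) c, sub_self,
    integral_rpow (Or.inl hq), Real.zero_rpow (by linarith : q + 1 ≠ 0), sub_zero]

lemma hval_right {q : ℝ} (hq : -1 < q) (c b : ℝ) :
    ∫ l in c..b, (l - c) ^ q = (b - c) ^ (q+1) / (q+1) := by
  rw [intervalIntegral.integral_comp_sub_right (fun x : ℝ => x ^ q) c, sub_self,
    integral_rpow (Or.inl hq), Real.zero_rpow (by linarith : q + 1 ≠ 0), sub_zero]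

lemma bound_or_zero {f g : ℝ → ℝ} {a b : ℝ} (hab : a ≤ b) (hg : IntervalIntegrable g volume a b)
    (hg0 : ∀ x ∈ Icc a b, 0 ≤ g x) (hle : ∀ᵐ x ∂(volume.restrict (Icc a b)), f x ≤ g x) :
    (∫ x in a..b, f x) ≤ ∫ x in a..b, g x := by
  by_cases hf : IntervalIntegrable f volume a b
  · exact integral_mono_ae_restrict hab hf hg hle
  · rw [intervalIntegral.integral_undef hf]
    exact intervalIntegral.integral_nonneg hab hg0

lemma ae_icc_of_forall_ne {a b : ℝ} {P : ℝ → Prop} (h : ∀ x ∈ Icc a b, x ≠ b → P x) :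
    ∀ᵐ x ∂(volume.restrict (Icc a b)), P x := by
  have h1 : ∀ᵐ x : ℝ ∂volume, x ≠ b := by
    rw [MeasureTheory.ae_iff]
    have : {x : ℝ | ¬ x ≠ b} = {b} := by ext x; simp
    rw [this]; exact Real.volume_singleton
  filter_upwards [MeasureTheory.ae_restrict_mem measurableSet_Icc,
    MeasureTheory.ae_restrict_of_ae h1] with x hx hne
  exact h x hx hne

lemma absII_int {p : ℝ} (hp : -1 < p) {s t r : ℝ} (hsr : s ≤ r) (hrt : r ≤ t) :
    IntervalIntegrable (fun l : ℝ => |r - l| ^ p) volume s t := by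
  have h1 : IntervalIntegrable (fun l : ℝ => |r - l| ^ p) volume s r := by
    refine (hII_left hp r s r).congr ?_
    intro l hl
    show (r - l) ^ p = |r - l| ^ p
    rw [Set.uIoc_of_le hsr] at hl
    rw [abs_of_nonneg (by linarith [hl.2] : (0:ℝ) ≤ r - l)]
  have h2 : IntervalIntegrable (fun l : ℝ => |r - l| ^ p) volume r t := by
    refine (hII_right hp r r t).congr ?_
    intro l hl
    show (l - r) ^ p = |r - l| ^ p
    rw [Set.uIoc_of_le hrt] at hl
    rw [abs_sub_comm, abs_of_nonneg (by linarith [hl.1] : (0:ℝ) ≤ l - r)]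
  exact h1.trans h2

lemma absII_val {p : ℝ} (hp : -1 < p) {s t r : ℝ} (hsr : s ≤ r) (hrt : r ≤ t) :
    (∫ l in s..t, |r - l| ^ p) ≤ 2 * ((t - s) ^ (p+1) / (p+1)) := by
  have hi1 := (absII_int hp hsr le_rfl : IntervalIntegrable _ volume s r)
  have hi2 := (absII_int hp le_rfl hrt : IntervalIntegrable _ volume r t)
  rw [← intervalIntegral.integral_add_adjacent_intervals hi1 hi2]
  have e1 : (∫ l in s..r, |r - l| ^ p) = (r - s) ^ (p+1) / (p+1) := by
    rw [← hval_left hp r s]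
    apply intervalIntegral.integral_congr
    intro l hl
    rw [Set.uIcc_of_le hsr] at hl
    show |r - l| ^ p = (r - l) ^ p
    rw [abs_of_nonneg (by linarith [hl.2] : (0:ℝ) ≤ r - l)]
  have e2 : (∫ l in r..t, |r - l| ^ p) = (t - r) ^ (p+1) / (p+1) := by
    rw [← hval_right hp r t]
    apply intervalIntegral.integral_congr
    intro l hl
    rw [Set.uIcc_of_le hrt] at hl
    show |r - l| ^ p = (l - r) ^ p
    rw [abs_sub_comm, abs_of_nonneg (by linarith [hl.1] : (0:ℝ) ≤ l - r)]
  rw [e1, e2]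
  have hp1 : (0:ℝ) < p + 1 := by linarith
  have b1 : (r - s) ^ (p+1) ≤ (t - s) ^ (p+1) :=
    Real.rpow_le_rpow (by linarith) (by linarith) (by linarith)
  have b2 : (t - r) ^ (p+1) ≤ (t - s) ^ (p+1) :=
    Real.rpow_le_rpow (by linarith) (by linarith) (by linarith)
  rw [← add_div]
  rw [two_mul, ← add_div]
  gcongr

lemma boundA {H γ s t τ : ℝ} (hH1 : 1/2 < H) (hH2 : H < 1) (hγ0 : 0 < γ)
    (hst : s < t) (htτ : t < τ) :
    (∫ r in s..t, ∫ l in s..t, (τ - r) ^ (-γ) * (τ - l) ^ (-γ) * |r - l| ^ (2*H - 2))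
      ≤ ((τ - t) ^ (-γ) * (τ - t) ^ (-γ) * (2 * ((t - s) ^ (2*H - 2 + 1) / (2*H - 2 + 1)))) * (t - s) := by
  have hp : -1 < 2*H - 2 := by linarith
  have htτ' : (0:ℝ) < τ - t := by linarith
  set K : ℝ := (τ - t) ^ (-γ) * (τ - t) ^ (-γ) * (2 * ((t - s) ^ (2*H - 2 + 1) / (2*H - 2 + 1))) with hK
  have hK0 : 0 ≤ K := by
    apply mul_nonneg (mul_nonneg (Real.rpow_nonneg (by linarith) _) (Real.rpow_nonneg (by linarith) _))
    have : (0:ℝ) ≤ (t - s) ^ (2*H - 2 + 1) := Real.rpow_nonneg (by linarith) _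
    have h21 : (0:ℝ) < 2*H - 2 + 1 := by linarith
    positivity
  have inner : ∀ r ∈ Icc s t, (∫ l in s..t, (τ - r) ^ (-γ) * (τ - l) ^ (-γ) * |r - l| ^ (2*H - 2)) ≤ K := by
    intro r hr
    have h1 : (τ - r) ^ (-γ) ≤ (τ - t) ^ (-γ) :=
      Real.rpow_le_rpow_of_nonpos htτ' (by linarith [hr.2]) (by linarith)
    calc (∫ l in s..t, (τ - r) ^ (-γ) * (τ - l) ^ (-γ) * |r - l| ^ (2*H - 2))
        ≤ ∫ l in s..t, (τ - t) ^ (-γ) * (τ - t) ^ (-γ) * |r - l| ^ (2*H - 2) := by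
          apply bound_or_zero hst.le
          · exact ((absII_int hp hr.1 hr.2).const_mul _)
          · intro l hl
            exact mul_nonneg (mul_nonneg (Real.rpow_nonneg (by linarith) _)
              (Real.rpow_nonneg (by linarith) _)) (Real.rpow_nonneg (abs_nonneg _) _)
          · filter_upwards [MeasureTheory.ae_restrict_mem measurableSet_Icc] with l hl
            have h2 : (τ - l) ^ (-γ) ≤ (τ - t) ^ (-γ) :=
              Real.rpow_le_rpow_of_nonpos htτ' (by linarith [hl.2]) (by linarith)
            apply mul_le_mul_of_nonneg_right _ (Real.rpow_nonneg (abs_nonneg _) _)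
            exact mul_le_mul h1 h2 (Real.rpow_nonneg (by linarith [hl.2]) _)
              (Real.rpow_nonneg (by linarith) _)
      _ = (τ - t) ^ (-γ) * (τ - t) ^ (-γ) * ∫ l in s..t, |r - l| ^ (2*H - 2) := by
          rw [← intervalIntegral.integral_const_mul]
      _ ≤ K := by
          rw [hK]
          apply mul_le_mul_of_nonneg_left (absII_val hp hr.1 hr.2)
          exact mul_nonneg (Real.rpow_nonneg (by linarith) _) (Real.rpow_nonneg (by linarith) _)
  calc (∫ r in s..t, ∫ l in s..t, (τ - r) ^ (-γ) * (τ - l) ^ (-γ) * |r - l| ^ (2*H - 2))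
      ≤ ∫ _r in s..t, K := by
        apply bound_or_zero hst.le intervalIntegrable_const (fun x _ => hK0)
        filter_upwards [MeasureTheory.ae_restrict_mem measurableSet_Icc] with r hr
        exact inner r hr
    _ = K * (t - s) := by rw [intervalIntegral.integral_const, smul_eq_mul, mul_comm]

lemma boundB {H γ s t τ : ℝ} (hH1 : 1/2 < H) (hH2 : H < 1) (hγ0 : 0 < γ) (hγH : γ < 2*H - 1)
    (hst : s < t) (htτ : t < τ) :
    (∫ r in s..t, ∫ l in s..t, (τ - r) ^ (-γ) * (τ - l) ^ (-γ) * |r - l| ^ (2*H - 2))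
      ≤ ((t - s) ^ (2*H-1-γ) / (2*H-1-γ)) * ((t - s) ^ (1-γ) / (1-γ))
        + ((1/2:ℝ) ^ (2*H-1-2*γ) * (1/(2*H-1-γ) + 1/(1-γ))) * ((t - s) ^ (2*H-2*γ) / (2*H-2*γ)) := by
  have hγ1 : γ < 1 := by linarith
  have hq : (0:ℝ) < 2*H-1-γ := by linarith
  have hqe : (-1:ℝ) < 2*H-2-γ := by linarith
  have hqneg : (2:ℝ)*H-2-γ < 0 := by linarith
  have h2H2γ : (0:ℝ) < 2*H-2*γ := by linarith
  have hγe : (-1:ℝ) < -γ := by linarith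
  have he2 : (-1:ℝ) < 2*H-1-2*γ := by linarith
  have hts : (0:ℝ) < t - s := by linarith
  set c1 : ℝ := (t - s) ^ (2*H-1-γ) / (2*H-1-γ) with hc1def
  set c2 : ℝ := (1/2:ℝ) ^ (2*H-1-2*γ) * (1/(2*H-1-γ) + 1/(1-γ)) with hc2def
  have hc1 : 0 ≤ c1 := div_nonneg (Real.rpow_nonneg hts.le _) hq.le
  have hc2 : 0 ≤ c2 := by
    apply mul_nonneg (Real.rpow_nonneg (by norm_num) _)
    have : (0:ℝ) < 1 - γ := by linarith
    positivity
  set G : ℝ → ℝ := fun r => c1 * (t - r) ^ (-γ) + c2 * (t - r) ^ (2*H-1-2*γ) with hGdef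
  have hG0 : ∀ x ∈ Icc s t, 0 ≤ G x := by
    intro x hx
    exact add_nonneg (mul_nonneg hc1 (Real.rpow_nonneg (by linarith [hx.2]) _))
      (mul_nonneg hc2 (Real.rpow_nonneg (by linarith [hx.2]) _))
  have hGi1 : IntervalIntegrable (fun r : ℝ => c1 * (t - r) ^ (-γ)) volume s t :=
    (hII_left hγe t s t).const_mul c1
  have hGi2 : IntervalIntegrable (fun r : ℝ => c2 * (t - r) ^ (2*H-1-2*γ)) volume s t :=
    (hII_left he2 t s t).const_mul c2
  have hGint : IntervalIntegrable G volume s t := hGi1.add hGi2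
  have inner : ∀ r ∈ Icc s t, r ≠ t →
      (∫ l in s..t, (τ - r) ^ (-γ) * (τ - l) ^ (-γ) * |r - l| ^ (2*H - 2)) ≤ G r := by
    intro r hr hne
    obtain ⟨hsr, hrt⟩ := hr
    have hrt' : r < t := lt_of_le_of_ne hrt hne
    have hrτ : r < τ := by linarith
    set m : ℝ := (r + t)/2 with hmdef
    have hrm : r < m := by rw [hmdef]; linarith
    have hmt : m < t := by rw [hmdef]; linarith
    have hmr : m - r = (t-r)/2 := by rw [hmdef]; ring
    have htm : t - m = (t-r)/2 := by rw [hmdef]; ring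
    have hd2 : (0:ℝ) < (t-r)/2 := by linarith
    by_cases hfi : IntervalIntegrable
        (fun l => (τ - r) ^ (-γ) * (τ - l) ^ (-γ) * |r - l| ^ (2*H - 2)) volume s t
    · have isub : ∀ a b : ℝ, s ≤ a → a ≤ b → b ≤ t → IntervalIntegrable
          (fun l => (τ - r) ^ (-γ) * (τ - l) ^ (-γ) * |r - l| ^ (2*H - 2)) volume a b := by
        intro a b ha hab hb
        apply hfi.mono_set
        rw [Set.uIcc_of_le hab, Set.uIcc_of_le hst.le]
        exact Set.Icc_subset_Icc ha hb
      have i1 := isub s r le_rfl hsr hrt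
      have i2 := isub r m hsr hrm.le hmt.le
      have i3 := isub m t (hsr.trans hrm.le) hmt.le le_rfl
      have i12 := isub s m le_rfl (hsr.trans hrm.le) hmt.le
      rw [← intervalIntegral.integral_add_adjacent_intervals i12 i3,
        ← intervalIntegral.integral_add_adjacent_intervals i1 i2]
      -- Piece 1
      have P1 : (∫ l in s..r, (τ - r) ^ (-γ) * (τ - l) ^ (-γ) * |r - l| ^ (2*H - 2))
          ≤ c1 * (t - r) ^ (-γ) := by
        calc (∫ l in s..r, (τ - r) ^ (-γ) * (τ - l) ^ (-γ) * |r - l| ^ (2*H - 2))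
            ≤ ∫ l in s..r, (t - r) ^ (-γ) * (r - l) ^ (2*H-2-γ) := by
              apply bound_or_zero hsr ((hII_left hqe r s r).const_mul _)
              · intro l hl
                exact mul_nonneg (Real.rpow_nonneg (by linarith) _)
                  (Real.rpow_nonneg (by linarith [hl.2]) _)
              · filter_upwards [MeasureTheory.ae_restrict_mem measurableSet_Icc] with l hl
                rcases eq_or_lt_of_le hl.2 with h | h
                · rw [h]
                  simp only [sub_self, abs_zero]
                  rw [Real.zero_rpow (by linarith : 2*H-2 ≠ 0),
                    Real.zero_rpow (by linarith : 2*H-2-γ ≠ 0)]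
                  simp
                · have hrl : (0:ℝ) < r - l := by linarith
                  rw [abs_of_pos hrl]
                  have A : (τ - r) ^ (-γ) ≤ (t - r) ^ (-γ) :=
                    Real.rpow_le_rpow_of_nonpos (by linarith) (by linarith) (by linarith)
                  have B : (τ - l) ^ (-γ) ≤ (r - l) ^ (-γ) :=
                    Real.rpow_le_rpow_of_nonpos hrl (by linarith) (by linarith)
                  calc (τ - r) ^ (-γ) * (τ - l) ^ (-γ) * (r - l) ^ (2*H-2)
                      ≤ (t - r) ^ (-γ) * (r - l) ^ (-γ) * (r - l) ^ (2*H-2) := by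
                        apply mul_le_mul_of_nonneg_right _ (Real.rpow_nonneg hrl.le _)
                        exact mul_le_mul A B (Real.rpow_nonneg (by linarith) _)
                          (Real.rpow_nonneg (by linarith) _)
                    _ = (t - r) ^ (-γ) * (r - l) ^ (2*H-2-γ) := by
                        rw [mul_assoc, ← Real.rpow_add hrl,
                          (by ring : -γ + (2*H-2) = 2*H-2-γ)]
          _ = (t - r) ^ (-γ) * ((r - s) ^ (2*H-2-γ+1) / (2*H-2-γ+1)) := by
              rw [intervalIntegral.integral_const_mul, hval_left hqe]
          _ ≤ (t - r) ^ (-γ) * c1 := by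
              apply mul_le_mul_of_nonneg_left _ (Real.rpow_nonneg (by linarith) _)
              rw [hc1def, (by ring : 2*H-2-γ+1 = 2*H-1-γ)]
              exact div_le_div₀ (Real.rpow_nonneg (by linarith) _)
                (Real.rpow_le_rpow (by linarith) (by linarith) (by linarith)) hq le_rfl
          _ = c1 * (t - r) ^ (-γ) := mul_comm _ _
      -- Piece 2
      have P2 : (∫ l in r..m, (τ - r) ^ (-γ) * (τ - l) ^ (-γ) * |r - l| ^ (2*H - 2))
          ≤ ((t-r)/2) ^ (-γ) * (((t-r)/2) ^ (2*H-1-γ) / (2*H-1-γ)) := by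
        calc (∫ l in r..m, (τ - r) ^ (-γ) * (τ - l) ^ (-γ) * |r - l| ^ (2*H - 2))
            ≤ ∫ l in r..m, ((t-r)/2) ^ (-γ) * (l - r) ^ (2*H-2-γ) := by
              apply bound_or_zero hrm.le ((hII_right hqe r r m).const_mul _)
              · intro l hl
                exact mul_nonneg (Real.rpow_nonneg hd2.le _)
                  (Real.rpow_nonneg (by linarith [hl.1]) _)
              · filter_upwards [MeasureTheory.ae_restrict_mem measurableSet_Icc] with l hl
                rcases eq_or_lt_of_le hl.1 with h | h
                · rw [← h]
                  simp only [sub_self, abs_zero]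
                  rw [Real.zero_rpow (by linarith : 2*H-2 ≠ 0),
                    Real.zero_rpow (by linarith : 2*H-2-γ ≠ 0)]
                  simp
                · have hlr : (0:ℝ) < l - r := by linarith
                  have hlm : l ≤ m := hl.2
                  have hτl : (0:ℝ) < τ - l := by linarith
                  have hτl2 : (t-r)/2 ≤ τ - l := by linarith [htm]
                  rw [abs_sub_comm, abs_of_pos hlr]
                  have A : (τ - r) ^ (-γ) ≤ (l - r) ^ (-γ) :=
                    Real.rpow_le_rpow_of_nonpos hlr (by linarith) (by linarith)
                  have B : (τ - l) ^ (-γ) ≤ ((t-r)/2) ^ (-γ) :=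
                    Real.rpow_le_rpow_of_nonpos hd2 hτl2 (by linarith)
                  calc (τ - r) ^ (-γ) * (τ - l) ^ (-γ) * (l - r) ^ (2*H-2)
                      ≤ (l - r) ^ (-γ) * ((t-r)/2) ^ (-γ) * (l - r) ^ (2*H-2) := by
                        apply mul_le_mul_of_nonneg_right _ (Real.rpow_nonneg hlr.le _)
                        exact mul_le_mul A B (Real.rpow_nonneg hτl.le _)
                          (Real.rpow_nonneg hlr.le _)
                    _ = ((t-r)/2) ^ (-γ) * ((l - r) ^ (-γ) * (l - r) ^ (2*H-2)) := by
                        ring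
                    _ = ((t-r)/2) ^ (-γ) * (l - r) ^ (2*H-2-γ) := by
                        rw [← Real.rpow_add hlr, (by ring : -γ + (2*H-2) = 2*H-2-γ)]
          _ = ((t-r)/2) ^ (-γ) * ((m - r) ^ (2*H-2-γ+1) / (2*H-2-γ+1)) := by
              rw [intervalIntegral.integral_const_mul, hval_right hqe]
          _ = ((t-r)/2) ^ (-γ) * (((t-r)/2) ^ (2*H-1-γ) / (2*H-1-γ)) := by
              rw [hmr, (by ring : 2*H-2-γ+1 = 2*H-1-γ)]
      -- Piece 3
      have P3 : (∫ l in m..t, (τ - r) ^ (-γ) * (τ - l) ^ (-γ) * |r - l| ^ (2*H - 2))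
          ≤ ((t-r)/2) ^ (2*H-2-γ) * (((t-r)/2) ^ (1-γ) / (1-γ)) := by
        calc (∫ l in m..t, (τ - r) ^ (-γ) * (τ - l) ^ (-γ) * |r - l| ^ (2*H - 2))
            ≤ ∫ l in m..t, ((t-r)/2) ^ (2*H-2-γ) * (t - l) ^ (-γ) := by
              apply bound_or_zero hmt.le ((hII_left hγe t m t).const_mul _)
              · intro l hl
                exact mul_nonneg (Real.rpow_nonneg hd2.le _)
                  (Real.rpow_nonneg (by linarith [hl.2]) _)
              · apply ae_icc_of_forall_ne
                intro l hl hlne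
                have hlt : l < t := lt_of_le_of_ne hl.2 hlne
                have hlr : (0:ℝ) < l - r := by linarith [hl.1]
                rw [abs_sub_comm, abs_of_pos hlr]
                have A : (τ - r) ^ (-γ) * (l - r) ^ (2*H-2) ≤ ((t-r)/2) ^ (2*H-2-γ) := by
                  have A1 : (τ - r) ^ (-γ) ≤ (l - r) ^ (-γ) :=
                    Real.rpow_le_rpow_of_nonpos hlr (by linarith) (by linarith)
                  have A2 : (l - r) ^ (-γ) * (l - r) ^ (2*H-2) = (l - r) ^ (2*H-2-γ) := by
                    rw [← Real.rpow_add hlr, (by ring : -γ + (2*H-2) = 2*H-2-γ)]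
                  have A3 : (l - r) ^ (2*H-2-γ) ≤ ((t-r)/2) ^ (2*H-2-γ) := by
                    apply Real.rpow_le_rpow_of_nonpos hd2 _ (by linarith)
                    have : m ≤ l := hl.1
                    linarith [hmr]
                  calc (τ - r) ^ (-γ) * (l - r) ^ (2*H-2)
                      ≤ (l - r) ^ (-γ) * (l - r) ^ (2*H-2) :=
                        mul_le_mul_of_nonneg_right A1 (Real.rpow_nonneg hlr.le _)
                    _ = (l - r) ^ (2*H-2-γ) := A2
                    _ ≤ ((t-r)/2) ^ (2*H-2-γ) := A3
                have B : (τ - l) ^ (-γ) ≤ (t - l) ^ (-γ) :=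
                  Real.rpow_le_rpow_of_nonpos (by linarith) (by linarith) (by linarith)
                calc (τ - r) ^ (-γ) * (τ - l) ^ (-γ) * (l - r) ^ (2*H-2)
                    = ((τ - r) ^ (-γ) * (l - r) ^ (2*H-2)) * (τ - l) ^ (-γ) := by ring
                  _ ≤ ((t-r)/2) ^ (2*H-2-γ) * (t - l) ^ (-γ) :=
                      mul_le_mul A B (Real.rpow_nonneg (by linarith) _)
                        (Real.rpow_nonneg hd2.le _)
          _ = ((t-r)/2) ^ (2*H-2-γ) * ((t - m) ^ (-γ+1) / (-γ+1)) := by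
              rw [intervalIntegral.integral_const_mul, hval_left hγe]
          _ = ((t-r)/2) ^ (2*H-2-γ) * (((t-r)/2) ^ (1-γ) / (1-γ)) := by
              rw [htm, (by ring : -γ+1 = 1-γ)]
      -- combine
      have sum23 : ((t-r)/2) ^ (-γ) * (((t-r)/2) ^ (2*H-1-γ) / (2*H-1-γ))
          + ((t-r)/2) ^ (2*H-2-γ) * (((t-r)/2) ^ (1-γ) / (1-γ))
          = c2 * (t - r) ^ (2*H-1-2*γ) := by
        have e1 : ((t-r)/2) ^ (-γ) * ((t-r)/2) ^ (2*H-1-γ) = ((t-r)/2) ^ (2*H-1-2*γ) := by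
          rw [← Real.rpow_add hd2, (by ring : -γ + (2*H-1-γ) = 2*H-1-2*γ)]
        have e2 : ((t-r)/2) ^ (2*H-2-γ) * ((t-r)/2) ^ (1-γ) = ((t-r)/2) ^ (2*H-1-2*γ) := by
          rw [← Real.rpow_add hd2, (by ring : 2*H-2-γ + (1-γ) = 2*H-1-2*γ)]
        have e3 : ((t-r)/2) ^ (2*H-1-2*γ) = (1/2:ℝ) ^ (2*H-1-2*γ) * (t-r) ^ (2*H-1-2*γ) := by
          rw [(by ring : (t-r)/2 = (1/2:ℝ) * (t-r)),
            Real.mul_rpow (by norm_num) (by linarith)]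
        have f1 : ((t-r)/2) ^ (-γ) * (((t-r)/2) ^ (2*H-1-γ) / (2*H-1-γ))
            = ((t-r)/2) ^ (2*H-1-2*γ) * (1/(2*H-1-γ)) := by rw [← e1]; ring
        have f2 : ((t-r)/2) ^ (2*H-2-γ) * (((t-r)/2) ^ (1-γ) / (1-γ))
            = ((t-r)/2) ^ (2*H-1-2*γ) * (1/(1-γ)) := by rw [← e2]; ring
        rw [f1, f2, e3, hc2def]
        ring
      calc (∫ l in s..r, (τ - r) ^ (-γ) * (τ - l) ^ (-γ) * |r - l| ^ (2*H - 2))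
            + (∫ l in r..m, (τ - r) ^ (-γ) * (τ - l) ^ (-γ) * |r - l| ^ (2*H - 2))
            + (∫ l in m..t, (τ - r) ^ (-γ) * (τ - l) ^ (-γ) * |r - l| ^ (2*H - 2))
          ≤ c1 * (t - r) ^ (-γ)
            + ((t-r)/2) ^ (-γ) * (((t-r)/2) ^ (2*H-1-γ) / (2*H-1-γ))
            + ((t-r)/2) ^ (2*H-2-γ) * (((t-r)/2) ^ (1-γ) / (1-γ)) :=
            add_le_add (add_le_add P1 P2) P3
        _ = c1 * (t - r) ^ (-γ) + (((t-r)/2) ^ (-γ) * (((t-r)/2) ^ (2*H-1-γ) / (2*H-1-γ))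
            + ((t-r)/2) ^ (2*H-2-γ) * (((t-r)/2) ^ (1-γ) / (1-γ))) := by ring
        _ = c1 * (t - r) ^ (-γ) + c2 * (t - r) ^ (2*H-1-2*γ) := by rw [sum23]
        _ = G r := by rw [hGdef]
    · rw [intervalIntegral.integral_undef hfi]
      exact hG0 r ⟨hsr, hrt⟩
  calc (∫ r in s..t, ∫ l in s..t, (τ - r) ^ (-γ) * (τ - l) ^ (-γ) * |r - l| ^ (2*H - 2))
      ≤ ∫ r in s..t, G r := by
        apply bound_or_zero hst.le hGint hG0
        exact ae_icc_of_forall_ne inner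
    _ = c1 * ((t - s) ^ (1-γ) / (1-γ)) + c2 * ((t - s) ^ (2*H-2*γ) / (2*H-2*γ)) := by
        rw [hGdef]
        rw [intervalIntegral.integral_add hGi1 hGi2,
          intervalIntegral.integral_const_mul, intervalIntegral.integral_const_mul,
          hval_left hγe, hval_left he2,
          (by ring : -γ+1 = 1-γ), (by ring : 2*H-1-2*γ+1 = 2*H-2*γ)]
    _ = _ := by rw [hc1def]


theorem stmt_9 (H γ : ℝ) (hH1 : 1/2 < H) (hH2 : H < 1) (hγ0 : 0 < γ) (hγH : γ < 2*H - 1) :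
    ∃ C > 0, ∀ s t τ : ℝ, 0 ≤ s → s < t → t < τ →
      H * (2*H - 1) *
        (∫ r in s..t, ∫ l in s..t, (τ - r) ^ (-γ) * (τ - l) ^ (-γ) * |r - l| ^ (2*H - 2))
      ≤ C * min ((τ - t) ^ (-(2*γ)) * (t - s) ^ (2*H)) ((t - s) ^ (2*H - 2*γ)) := by
  have haH : (0:ℝ) < H * (2*H - 1) := by nlinarith
  have hγ1 : γ < 1 := by linarith
  have hq : (0:ℝ) < 2*H-1-γ := by linarith
  have h2H2γ : (0:ℝ) < 2*H-2*γ := by linarith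
  set CA : ℝ := H * (2*H - 1) * (2 / (2*H-2+1)) with hCAdef
  set CB : ℝ := H * (2*H - 1) * (1/((2*H-1-γ)*(1-γ))
    + (1/2:ℝ) ^ (2*H-1-2*γ) * (1/(2*H-1-γ) + 1/(1-γ)) / (2*H-2*γ)) with hCBdef
  have hCA : 0 < CA := by
    apply mul_pos haH
    have : (0:ℝ) < 2*H-2+1 := by linarith
    positivity
  have hCB : 0 ≤ CB := by
    apply le_of_lt
    apply mul_pos haH
    have h1γ : (0:ℝ) < 1 - γ := by linarith
    have hhalf : (0:ℝ) < (1/2:ℝ) ^ (2*H-1-2*γ) := Real.rpow_pos_of_pos (by norm_num) _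
    positivity
  refine ⟨max CA CB, lt_max_of_lt_left hCA, ?_⟩
  intro s t τ hs hst htτ
  have hts : (0:ℝ) < t - s := by linarith
  have htτ' : (0:ℝ) < τ - t := by linarith
  have hA1 : (τ-t) ^ (-γ) * (τ-t) ^ (-γ) = (τ-t) ^ (-(2*γ)) := by
    rw [← Real.rpow_add htτ', (by ring : -γ + -γ = -(2*γ))]
  have hA2 : (t-s) ^ (2*H-2+1) * (t-s) = (t-s) ^ (2*H) := by
    nth_rewrite 2 [← Real.rpow_one (t-s)]
    rw [← Real.rpow_add hts, (by ring : 2*H-2+1+1 = 2*H)]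
  have hB1 : (t-s) ^ (2*H-1-γ) * (t-s) ^ (1-γ) = (t-s) ^ (2*H-2*γ) := by
    rw [← Real.rpow_add hts, (by ring : 2*H-1-γ + (1-γ) = 2*H-2*γ)]
  have gA : H * (2*H - 1) *
      (∫ r in s..t, ∫ l in s..t, (τ - r) ^ (-γ) * (τ - l) ^ (-γ) * |r - l| ^ (2*H - 2))
      ≤ CA * ((τ - t) ^ (-(2*γ)) * (t - s) ^ (2*H)) := by
    calc H * (2*H - 1) *
        (∫ r in s..t, ∫ l in s..t, (τ - r) ^ (-γ) * (τ - l) ^ (-γ) * |r - l| ^ (2*H - 2))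
        ≤ H * (2*H - 1) * (((τ - t) ^ (-γ) * (τ - t) ^ (-γ)
            * (2 * ((t - s) ^ (2*H - 2 + 1) / (2*H - 2 + 1)))) * (t - s)) :=
          mul_le_mul_of_nonneg_left (boundA hH1 hH2 hγ0 hst htτ) haH.le
      _ = CA * ((τ - t) ^ (-(2*γ)) * (t - s) ^ (2*H)) := by
          rw [hCAdef, ← hA1, ← hA2]; ring
  have gB : H * (2*H - 1) *
      (∫ r in s..t, ∫ l in s..t, (τ - r) ^ (-γ) * (τ - l) ^ (-γ) * |r - l| ^ (2*H - 2))
      ≤ CB * (t - s) ^ (2*H-2*γ) := by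
    calc H * (2*H - 1) *
        (∫ r in s..t, ∫ l in s..t, (τ - r) ^ (-γ) * (τ - l) ^ (-γ) * |r - l| ^ (2*H - 2))
        ≤ H * (2*H - 1) * (((t - s) ^ (2*H-1-γ) / (2*H-1-γ)) * ((t - s) ^ (1-γ) / (1-γ))
            + ((1/2:ℝ) ^ (2*H-1-2*γ) * (1/(2*H-1-γ) + 1/(1-γ)))
              * ((t - s) ^ (2*H-2*γ) / (2*H-2*γ))) :=
          mul_le_mul_of_nonneg_left (boundB hH1 hH2 hγ0 hγH hst htτ) haH.le
      _ = CB * (t - s) ^ (2*H-2*γ) := by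
          rw [hCBdef, div_mul_div_comm, hB1]; ring
  have hAnn : 0 ≤ (τ - t) ^ (-(2*γ)) * (t - s) ^ (2*H) :=
    mul_nonneg (Real.rpow_nonneg htτ'.le _) (Real.rpow_nonneg hts.le _)
  have hBnn : 0 ≤ (t - s) ^ (2*H-2*γ) := Real.rpow_nonneg hts.le _
  rcases le_total ((τ - t) ^ (-(2*γ)) * (t - s) ^ (2*H)) ((t - s) ^ (2*H - 2*γ)) with h | h
  · rw [min_eq_left h]
    exact gA.trans (mul_le_mul_of_nonneg_right (le_max_left _ _) hAnn)
  · rw [min_eq_right h]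
    exact gB.trans (mul_le_mul_of_nonneg_right (le_max_right _ _) hBnn)
end

section
/- Let H∈(1/2,1), γ∈(0,2H−1). For 0≤s<t<τ, the quadruple integral ∫_s^t ∫_s^{r_1} (τ−r_1)^{−γ}(τ−r_2)^{−γ}|r_1−r_2|^{2H−2}(r_1−s)^{2H−2γ} dr_2 dr_1 ≤ C · min( (τ−t)^{−2γ}(t−s)^{4H−2γ}, (t−s)^{4H−4γ} ), where C depends only on H and γ. -/
open MeasureTheory Real intervalIntegral

lemma aux_int (p a b : ℝ) (hp : -1 < p) :
    IntervalIntegrable (fun x => (b - x) ^ p) volume a b := by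
  have h := (intervalIntegral.intervalIntegrable_rpow' (a := b - b) (b := b - a) hp).comp_sub_left b
  simpa using h.symm

lemma aux_eq (p a b : ℝ) (hp : -1 < p) :
    (∫ x in a..b, (b - x) ^ p) = (b - a) ^ (p + 1) / (p + 1) := by
  rw [intervalIntegral.integral_comp_sub_left (fun x => x ^ p) b,
    show b - b = (0:ℝ) by ring, integral_rpow (Or.inl hp),
    Real.zero_rpow (by linarith : p + 1 ≠ 0)]
  ring

lemma aux_ne (s : ℝ) : ∀ᵐ (x : ℝ) ∂volume, x ≠ s := by
  have h : {x : ℝ | ¬ x ≠ s} = {s} := by ext; simp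
  rw [ae_iff, h]; exact Real.volume_singleton

set_option maxHeartbeats 1000000 in
theorem stmt_11 (H γ : ℝ) (hH1 : 1/2 < H) (hH2 : H < 1) (hγ0 : 0 < γ) (hγH : γ < 2*H - 1) :
    ∃ C > 0, ∀ s t τ : ℝ, 0 ≤ s → s < t → t < τ →
      (∫ r1 in s..t, ∫ r2 in s..r1,
        (τ - r1) ^ (-γ) * (τ - r2) ^ (-γ) * |r1 - r2| ^ (2*H - 2) * (r1 - s) ^ (2*H - 2*γ))
      ≤ C * min ((τ - t) ^ (-(2*γ)) * (t - s) ^ (4*H - 2*γ)) ((t - s) ^ (4*H - 4*γ)) := by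
  have h2H1 : 0 < 2*H - 1 := by linarith
  have hγ1 : γ < 1 := by linarith
  have h2Hγ : 0 < 2*H - 1 - γ := by linarith
  set Ca : ℝ := 1 / (2*H - 1) with hCa_def
  set Cb : ℝ := 1 / ((2*H - 1 - γ) * (1 - γ)) with hCb_def
  have hCa : 0 < Ca := by rw [hCa_def]; positivity
  have hCb : 0 < Cb := one_div_pos.mpr (mul_pos h2Hγ (by linarith))
  have hC : 0 < max Ca Cb := lt_max_of_lt_left hCa
  refine ⟨max Ca Cb, hC, ?_⟩
  intro s t τ hs hst htτ
  have hδ0 : (0:ℝ) < t - s := sub_pos.mpr hst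
  have hτt : (0:ℝ) < τ - t := sub_pos.mpr htτ
  set A : ℝ := (τ - t) ^ (-(2*γ)) * (t - s) ^ (4*H - 2*γ) with hA_def
  set B : ℝ := (t - s) ^ (4*H - 4*γ) with hB_def
  have hA0 : 0 ≤ A := by
    rw [hA_def]
    exact mul_nonneg (Real.rpow_nonneg hτt.le _) (Real.rpow_nonneg hδ0.le _)
  have hB0 : 0 ≤ B := Real.rpow_nonneg hδ0.le _
  rw [mul_min_of_nonneg _ _ hC.le]
  set f : ℝ → ℝ → ℝ := fun r1 r2 =>
      (τ - r1) ^ (-γ) * (τ - r2) ^ (-γ) * |r1 - r2| ^ (2*H - 2) * (r1 - s) ^ (2*H - 2*γ)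
    with hf_def
  by_cases hF : IntervalIntegrable (fun r1 => ∫ r2 in s..r1, f r1 r2) volume s t
  case neg =>
    rw [intervalIntegral.integral_undef hF]
    exact le_min (mul_nonneg hC.le hA0) (mul_nonneg hC.le hB0)
  case pos =>
  -- Bound (a)
  have hb1 : (∫ r1 in s..t, ∫ r2 in s..r1, f r1 r2) ≤ Ca * A := by
    set Ka : ℝ := (τ - t) ^ (-(2*γ)) * (t - s) ^ (2*H - 2*γ) * ((t - s) ^ (2*H - 1) / (2*H - 1))
      with hKa_def
    have hKa0 : 0 ≤ Ka := by
      rw [hKa_def]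
      exact mul_nonneg (mul_nonneg (Real.rpow_nonneg hτt.le _) (Real.rpow_nonneg hδ0.le _))
        (div_nonneg (Real.rpow_nonneg hδ0.le _) h2H1.le)
    have key : ∀ r1 ∈ Set.Icc s t, (∫ r2 in s..r1, f r1 r2) ≤ Ka := by
      intro r1 hr1
      obtain ⟨hr1s, hr1t⟩ := hr1
      by_cases hf2 : IntervalIntegrable (fun r2 => f r1 r2) volume s r1
      case neg => rw [intervalIntegral.integral_undef hf2]; exact hKa0
      case pos =>
      set g : ℝ → ℝ := fun r2 =>
          ((τ - t) ^ (-(2*γ)) * (r1 - s) ^ (2*H - 2*γ)) * (r1 - r2) ^ (2*H - 2) with hg_def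
      have hgint : IntervalIntegrable g volume s r1 :=
        (aux_int (2*H - 2) s r1 (by linarith)).const_mul _
      have hpt : ∀ r2 ∈ Set.Icc s r1, f r1 r2 ≤ g r2 := by
        intro r2 hr2
        have h1 : (τ - r1) ^ (-γ) ≤ (τ - t) ^ (-γ) :=
          Real.rpow_le_rpow_of_nonpos hτt (by linarith) (by linarith)
        have h2 : (τ - r2) ^ (-γ) ≤ (τ - t) ^ (-γ) :=
          Real.rpow_le_rpow_of_nonpos hτt (by linarith [hr2.2]) (by linarith)
        have habs : |r1 - r2| = r1 - r2 := abs_of_nonneg (by linarith [hr2.2])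
        have hn1 : 0 ≤ (τ - r2) ^ (-γ) := Real.rpow_nonneg (by linarith [hr2.1, hr2.2]) _
        have hn2 : 0 ≤ (τ - t) ^ (-γ) := Real.rpow_nonneg hτt.le _
        have hn3 : 0 ≤ (r1 - r2) ^ (2*H - 2) := Real.rpow_nonneg (by linarith [hr2.2]) _
        have hn4 : 0 ≤ (r1 - s) ^ (2*H - 2*γ) := Real.rpow_nonneg (by linarith) _
        have step : (τ - r1) ^ (-γ) * (τ - r2) ^ (-γ) * (r1 - r2) ^ (2*H - 2)
            * (r1 - s) ^ (2*H - 2*γ) ≤ (τ - t) ^ (-γ) * (τ - t) ^ (-γ) * (r1 - r2) ^ (2*H - 2)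
            * (r1 - s) ^ (2*H - 2*γ) := by
          have s1 := mul_le_mul h1 h2 hn1 hn2
          exact mul_le_mul_of_nonneg_right (mul_le_mul_of_nonneg_right s1 hn3) hn4
        calc f r1 r2 = (τ - r1) ^ (-γ) * (τ - r2) ^ (-γ) * (r1 - r2) ^ (2*H - 2)
              * (r1 - s) ^ (2*H - 2*γ) := by simp only [hf_def]; rw [habs]
          _ ≤ (τ - t) ^ (-γ) * (τ - t) ^ (-γ) * (r1 - r2) ^ (2*H - 2)
              * (r1 - s) ^ (2*H - 2*γ) := step
          _ = g r2 := by
              simp only [hg_def]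
              rw [← Real.rpow_add hτt, show -γ + -γ = -(2*γ) by ring]; ring
      have hcomp : (∫ r2 in s..r1, g r2)
          = ((τ - t) ^ (-(2*γ)) * (r1 - s) ^ (2*H - 2*γ)) * ((r1 - s) ^ (2*H - 1) / (2*H - 1)) := by
        simp only [hg_def]
        rw [intervalIntegral.integral_const_mul, aux_eq (2*H - 2) s r1 (by linarith),
          show 2*H - 2 + 1 = 2*H - 1 by ring]
      have hfin : ((τ - t) ^ (-(2*γ)) * (r1 - s) ^ (2*H - 2*γ))
          * ((r1 - s) ^ (2*H - 1) / (2*H - 1)) ≤ Ka := by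
        rw [hKa_def]
        have e1 : (r1 - s) ^ (2*H - 2*γ) ≤ (t - s) ^ (2*H - 2*γ) :=
          Real.rpow_le_rpow (by linarith) (by linarith) (by linarith)
        have e2 : (r1 - s) ^ (2*H - 1) ≤ (t - s) ^ (2*H - 1) :=
          Real.rpow_le_rpow (by linarith) (by linarith) (by linarith)
        have e3 : (r1 - s) ^ (2*H - 1) / (2*H - 1) ≤ (t - s) ^ (2*H - 1) / (2*H - 1) :=
          (div_le_div_iff_of_pos_right h2H1).mpr e2
        exact mul_le_mul (mul_le_mul_of_nonneg_left e1 (Real.rpow_nonneg hτt.le _)) e3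
          (div_nonneg (Real.rpow_nonneg (by linarith) _) h2H1.le)
          (mul_nonneg (Real.rpow_nonneg hτt.le _) (Real.rpow_nonneg hδ0.le _))
      exact le_trans (intervalIntegral.integral_mono_on hr1s hf2 hgint hpt)
        (hcomp ▸ hfin)
    have hpow : (t - s) * ((t - s) ^ (2*H - 2*γ) * (t - s) ^ (2*H - 1))
        = (t - s) ^ (4*H - 2*γ) := by
      nth_rewrite 1 [← Real.rpow_one (t - s)]
      rw [← Real.rpow_add hδ0, ← Real.rpow_add hδ0,
        show (2*H - 2*γ) + (2*H - 1) = 4*H - 2*γ - 1 by ring,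
        show (1:ℝ) + (4*H - 2*γ - 1) = 4*H - 2*γ by ring]
    calc (∫ r1 in s..t, ∫ r2 in s..r1, f r1 r2) ≤ ∫ _r1 in s..t, Ka :=
          intervalIntegral.integral_mono_on hst.le hF intervalIntegrable_const key
      _ = (t - s) * Ka := by rw [intervalIntegral.integral_const, smul_eq_mul]
      _ = ((τ - t) ^ (-(2*γ)) * ((t - s) * ((t - s) ^ (2*H - 2*γ) * (t - s) ^ (2*H - 1))))
            / (2*H - 1) := by rw [hKa_def]; ring
      _ = ((τ - t) ^ (-(2*γ)) * (t - s) ^ (4*H - 2*γ)) / (2*H - 1) := by rw [hpow]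
      _ = Ca * A := by rw [hCa_def, hA_def]; ring
  -- Bound (b)
  have hb2 : (∫ r1 in s..t, ∫ r2 in s..r1, f r1 r2) ≤ Cb * B := by
    set Kb : ℝ := (t - s) ^ (4*H - 1 - 3*γ) / (2*H - 1 - γ) with hKb_def
    have hKb0 : 0 ≤ Kb := div_nonneg (Real.rpow_nonneg hδ0.le _) h2Hγ.le
    set g : ℝ → ℝ := fun r1 => Kb * (t - r1) ^ (-γ) with hg_def
    have hgint : IntervalIntegrable g volume s t :=
      (aux_int (-γ) s t (by linarith)).const_mul _
    have key : ∀ r1 ∈ Set.Ioo s t, (∫ r2 in s..r1, f r1 r2) ≤ g r1 := by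
      intro r1 hr1
      obtain ⟨hr1s, hr1t⟩ := hr1
      have hg0 : 0 ≤ g r1 := by
        simp only [hg_def]
        exact mul_nonneg hKb0 (Real.rpow_nonneg (by linarith) _)
      by_cases hf2 : IntervalIntegrable (fun r2 => f r1 r2) volume s r1
      case neg => rw [intervalIntegral.integral_undef hf2]; exact hg0
      case pos =>
      set g2 : ℝ → ℝ := fun r2 =>
          ((t - r1) ^ (-γ) * (r1 - s) ^ (2*H - 2*γ)) * (r1 - r2) ^ (2*H - 2 - γ) with hg2_def
      have hg2int : IntervalIntegrable g2 volume s r1 :=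
        (aux_int (2*H - 2 - γ) s r1 (by linarith)).const_mul _
      have hpt : ∀ r2 ∈ Set.Icc s r1, f r1 r2 ≤ g2 r2 := by
        intro r2 hr2
        rcases eq_or_lt_of_le hr2.2 with heq | hlt
        · have hfz : f r1 r2 = 0 := by
            simp only [hf_def, heq, sub_self, abs_zero]
            rw [Real.zero_rpow (by intro h; nlinarith : 2*H - 2 ≠ 0)]
            ring
          have hgz : 0 ≤ g2 r2 := by
            simp only [hg2_def]
            exact mul_nonneg (mul_nonneg (Real.rpow_nonneg (by linarith) _)
              (Real.rpow_nonneg (by linarith) _)) (Real.rpow_nonneg (by linarith [hr2.2]) _)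
          linarith
        · have h1 : (τ - r1) ^ (-γ) ≤ (t - r1) ^ (-γ) :=
            Real.rpow_le_rpow_of_nonpos (by linarith) (by linarith) (by linarith)
          have h2 : (τ - r2) ^ (-γ) ≤ (r1 - r2) ^ (-γ) :=
            Real.rpow_le_rpow_of_nonpos (by linarith) (by linarith) (by linarith)
          have habs : |r1 - r2| = r1 - r2 := abs_of_nonneg (by linarith)
          have hn1 : 0 ≤ (τ - r2) ^ (-γ) := Real.rpow_nonneg (by linarith [hr2.1, hr2.2]) _
          have hn2 : 0 ≤ (t - r1) ^ (-γ) := Real.rpow_nonneg (by linarith) _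
          have hn3 : 0 ≤ (r1 - r2) ^ (2*H - 2) := Real.rpow_nonneg (by linarith) _
          have hn4 : 0 ≤ (r1 - s) ^ (2*H - 2*γ) := Real.rpow_nonneg (by linarith) _
          have step : (τ - r1) ^ (-γ) * (τ - r2) ^ (-γ) * (r1 - r2) ^ (2*H - 2)
              * (r1 - s) ^ (2*H - 2*γ) ≤ (t - r1) ^ (-γ) * (r1 - r2) ^ (-γ)
              * (r1 - r2) ^ (2*H - 2) * (r1 - s) ^ (2*H - 2*γ) := by
            have s1 := mul_le_mul h1 h2 hn1 hn2
            exact mul_le_mul_of_nonneg_right (mul_le_mul_of_nonneg_right s1 hn3) hn4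
          calc f r1 r2 = (τ - r1) ^ (-γ) * (τ - r2) ^ (-γ) * (r1 - r2) ^ (2*H - 2)
                * (r1 - s) ^ (2*H - 2*γ) := by simp only [hf_def]; rw [habs]
            _ ≤ (t - r1) ^ (-γ) * (r1 - r2) ^ (-γ) * (r1 - r2) ^ (2*H - 2)
                * (r1 - s) ^ (2*H - 2*γ) := step
            _ = g2 r2 := by
                simp only [hg2_def]
                rw [mul_assoc ((t - r1) ^ (-γ)), ← Real.rpow_add (by linarith : (0:ℝ) < r1 - r2),
                  show -γ + (2*H - 2) = 2*H - 2 - γ by ring]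
                ring
      have hcomp : (∫ r2 in s..r1, g2 r2) = ((t - r1) ^ (-γ) * (r1 - s) ^ (2*H - 2*γ))
          * ((r1 - s) ^ (2*H - 1 - γ) / (2*H - 1 - γ)) := by
        simp only [hg2_def]
        rw [intervalIntegral.integral_const_mul, aux_eq (2*H - 2 - γ) s r1 (by linarith),
          show 2*H - 2 - γ + 1 = 2*H - 1 - γ by ring]
      have hcomb : ((t - r1) ^ (-γ) * (r1 - s) ^ (2*H - 2*γ))
          * ((r1 - s) ^ (2*H - 1 - γ) / (2*H - 1 - γ))
          = (t - r1) ^ (-γ) * ((r1 - s) ^ (4*H - 1 - 3*γ) / (2*H - 1 - γ)) := by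
        have hrs : (r1 - s) ^ (2*H - 2*γ) * (r1 - s) ^ (2*H - 1 - γ)
            = (r1 - s) ^ (4*H - 1 - 3*γ) := by
          rw [← Real.rpow_add (by linarith : (0:ℝ) < r1 - s),
            show 2*H - 2*γ + (2*H - 1 - γ) = 4*H - 1 - 3*γ by ring]
        calc ((t - r1) ^ (-γ) * (r1 - s) ^ (2*H - 2*γ))
              * ((r1 - s) ^ (2*H - 1 - γ) / (2*H - 1 - γ))
            = ((t - r1) ^ (-γ)
                * ((r1 - s) ^ (2*H - 2*γ) * (r1 - s) ^ (2*H - 1 - γ))) / (2*H - 1 - γ) := by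
              ring
          _ = (t - r1) ^ (-γ) * ((r1 - s) ^ (4*H - 1 - 3*γ) / (2*H - 1 - γ)) := by
              rw [hrs]; ring
      have hfin : (t - r1) ^ (-γ) * ((r1 - s) ^ (4*H - 1 - 3*γ) / (2*H - 1 - γ)) ≤ g r1 := by
        have e : (r1 - s) ^ (4*H - 1 - 3*γ) / (2*H - 1 - γ) ≤ Kb := by
          rw [hKb_def]
          exact (div_le_div_iff_of_pos_right h2Hγ).mpr
            (Real.rpow_le_rpow (by linarith) (by linarith) (by linarith))
        calc (t - r1) ^ (-γ) * ((r1 - s) ^ (4*H - 1 - 3*γ) / (2*H - 1 - γ))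
            ≤ (t - r1) ^ (-γ) * Kb :=
              mul_le_mul_of_nonneg_left e (Real.rpow_nonneg (by linarith) _)
          _ = g r1 := by simp only [hg_def]; ring
      exact le_trans (intervalIntegral.integral_mono_on hr1s.le hf2 hg2int hpt)
        (by rw [hcomp, hcomb]; exact hfin)
    have hae : (fun r1 => ∫ r2 in s..r1, f r1 r2) ≤ᵐ[volume.restrict (Set.Icc s t)] g := by
      filter_upwards [ae_restrict_mem measurableSet_Icc, ae_restrict_of_ae (aux_ne s),
        ae_restrict_of_ae (aux_ne t)] with x hx hxs hxt
      exact key x ⟨lt_of_le_of_ne hx.1 (Ne.symm hxs), lt_of_le_of_ne hx.2 hxt⟩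
    have hcomp2 : (∫ r1 in s..t, g r1) = Kb * ((t - s) ^ (1 - γ) / (1 - γ)) := by
      simp only [hg_def]
      rw [intervalIntegral.integral_const_mul, aux_eq (-γ) s t (by linarith),
        show -γ + 1 = 1 - γ by ring]
    have hfin2 : Kb * ((t - s) ^ (1 - γ) / (1 - γ)) = Cb * B := by
      rw [hKb_def, hCb_def, hB_def, div_mul_div_comm, ← Real.rpow_add hδ0,
        show 4*H - 1 - 3*γ + (1 - γ) = 4*H - 4*γ by ring]
      ring
    calc (∫ r1 in s..t, ∫ r2 in s..r1, f r1 r2) ≤ ∫ r1 in s..t, g r1 :=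
          intervalIntegral.integral_mono_ae_restrict hst.le hF hgint hae
      _ = Cb * B := by rw [hcomp2, hfin2]
  refine le_min (hb1.trans ?_) (hb2.trans ?_)
  · exact mul_le_mul_of_nonneg_right (le_max_left _ _) hA0
  · exact mul_le_mul_of_nonneg_right (le_max_right _ _) hB0
end

section
/- Let H∈(1/2,1), γ∈(0,2H−1). For 0≤s<t<τ, ∫_s^t ∫_s^r (τ−r)^{−γ}(r−l)^{−γ}(r−l)^{2H−2} dl dr ≤ C · min( (τ−t)^{−γ}(t−s)^{2H−γ}, (t−s)^{2H−2γ} ), where C depends only on H and γ. -/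
open MeasureTheory Real

theorem stmt_12 (H γ : ℝ) (hH1 : 1/2 < H) (hH2 : H < 1) (hγ0 : 0 < γ) (hγH : γ < 2*H - 1) :
    ∃ C > 0, ∀ s t τ : ℝ, 0 ≤ s → s < t → t < τ →
      (∫ r in s..t, ∫ l in s..r, (τ - r) ^ (-γ) * (r - l) ^ (-γ) * (r - l) ^ (2*H - 2))
      ≤ C * min ((τ - t) ^ (-γ) * (t - s) ^ (2*H - γ)) ((t - s) ^ (2*H - 2*γ)) := by
  have hq0 : 0 < 2*H - 1 - γ := by linarith
  have hq1 : 0 < 2*H - γ := by linarith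
  have hγ1 : γ < 1 := by linarith
  set q : ℝ := 2*H - 1 - γ with hqdef
  have hd1 : (0:ℝ) < q*(2*H-γ) := mul_pos hq0 hq1
  have hd2 : (0:ℝ) < q*(1-γ) := mul_pos hq0 (by linarith)
  have hC : (0:ℝ) < 1/(q*(2*H-γ)) + 1/(q*(1-γ)) :=
    add_pos (div_pos one_pos hd1) (div_pos one_pos hd2)
  refine ⟨1/(q*(2*H-γ)) + 1/(q*(1-γ)), hC, ?_⟩
  intro s t τ hs hst htτ
  have hts : (0:ℝ) < t - s := by linarith
  have hτt : (0:ℝ) < τ - t := by linarith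
  -- inner integral
  have hinner : ∀ r ∈ Set.uIcc s t,
      (∫ l in s..r, (τ - r) ^ (-γ) * (r - l) ^ (-γ) * (r - l) ^ (2*H - 2))
        = (τ - r) ^ (-γ) * ((r - s) ^ q / q) := by
    intro r hr
    rw [Set.uIcc_of_le hst.le] at hr
    have hcongr : (∫ l in s..r, (τ - r) ^ (-γ) * (r - l) ^ (-γ) * (r - l) ^ (2*H - 2))
        = ∫ l in s..r, (τ - r) ^ (-γ) * (r - l) ^ (2*H - 2 - γ) := by
      apply intervalIntegral.integral_congr
      intro l hl
      rw [Set.uIcc_of_le hr.1] at hl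
      have hx : (0:ℝ) ≤ r - l := by linarith [hl.2]
      simp only
      rcases hx.eq_or_lt with h | h
      · rw [← h, Real.zero_rpow (by intro hc; exact hγ0.ne' (by linarith : γ = 0)),
          Real.zero_rpow (by intro hc; nlinarith : 2*H - 2 - γ ≠ 0)]
        ring
      · rw [show (2*H - 2 - γ) = -γ + (2*H - 2) by ring, Real.rpow_add h, ← mul_assoc]
    rw [hcongr, intervalIntegral.integral_const_mul]
    congr 1
    have := intervalIntegral.integral_comp_sub_left (a := s) (b := r)
      (fun x => x ^ (2*H - 2 - γ)) r
    rw [this, sub_self,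
      integral_rpow (Or.inl (by linarith : (-1:ℝ) < 2*H - 2 - γ)),
      Real.zero_rpow (by linarith [hqdef] : (0:ℝ) < 2*H - 2 - γ + 1).ne']
    rw [show (2*H - 2 - γ + 1 : ℝ) = q by rw [hqdef]; ring]
    ring
  rw [intervalIntegral.integral_congr hinner]
  -- integrability facts
  have hfc : ContinuousOn (fun r => (τ - r) ^ (-γ) * ((r - s) ^ q / q)) (Set.uIcc s t) := by
    rw [Set.uIcc_of_le hst.le]
    intro r hr
    have h1 : ContinuousAt (fun r : ℝ => (τ - r) ^ (-γ)) r := by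
      have : (0:ℝ) < τ - r := by linarith [hr.2]
      exact (Real.continuousAt_rpow_const _ _ (Or.inl this.ne')).comp
        (continuousAt_const.sub continuousAt_id)
    have h2 : ContinuousAt (fun r : ℝ => (r - s) ^ q / q) r := by
      exact ((Real.continuousAt_rpow_const _ _ (Or.inr hq0.le)).comp
        (continuousAt_id.sub continuousAt_const)).div_const _
    exact (h1.mul h2).continuousWithinAt
  have hf_int : IntervalIntegrable (fun r => (τ - r) ^ (-γ) * ((r - s) ^ q / q))
      volume s t := hfc.intervalIntegrable
  have hgA_int : IntervalIntegrable (fun r => (τ - t) ^ (-γ) * ((r - s) ^ q / q))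
      volume s t := by
    apply ContinuousOn.intervalIntegrable
    intro r _
    exact (continuousAt_const.mul (((Real.continuousAt_rpow_const _ _ (Or.inr hq0.le)).comp
      (continuousAt_id.sub continuousAt_const)).div_const _)).continuousWithinAt
  have hgB_base : IntervalIntegrable (fun r => (t - r) ^ (-γ)) volume s t := by
    have h := (intervalIntegral.intervalIntegrable_rpow'
      (a := 0) (b := t - s) (by linarith : (-1:ℝ) < -γ)).comp_sub_left t
    simpa using h.symm
  have hgB_int : IntervalIntegrable (fun r => (t - r) ^ (-γ) * ((t - s) ^ q / q))
      volume s t := hgB_base.mul_const _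
  -- bound A
  have hA : (∫ r in s..t, (τ - r) ^ (-γ) * ((r - s) ^ q / q))
      ≤ (τ - t) ^ (-γ) * ((t - s) ^ (2*H - γ) / ((2*H - γ) * q)) := by
    have hmono : (∫ r in s..t, (τ - r) ^ (-γ) * ((r - s) ^ q / q))
        ≤ ∫ r in s..t, (τ - t) ^ (-γ) * ((r - s) ^ q / q) := by
      apply intervalIntegral.integral_mono_on hst.le hf_int hgA_int
      intro r hr
      have h1 : (τ - r) ^ (-γ) ≤ (τ - t) ^ (-γ) :=
        Real.rpow_le_rpow_of_nonpos hτt (by linarith [hr.2]) (by linarith)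
      have h2 : (0:ℝ) ≤ (r - s) ^ q / q := by
        apply div_nonneg _ hq0.le
        exact Real.rpow_nonneg (by linarith [hr.1]) _
      exact mul_le_mul_of_nonneg_right h1 h2
    refine hmono.trans_eq ?_
    rw [intervalIntegral.integral_const_mul]
    congr 1
    rw [intervalIntegral.integral_div]
    have := intervalIntegral.integral_comp_sub_right (a := s) (b := t)
      (fun x => x ^ q) s
    rw [this, sub_self, integral_rpow (Or.inl (by linarith : (-1:ℝ) < q)),
      Real.zero_rpow (by positivity : (q + 1 : ℝ) ≠ 0),
      show (q + 1 : ℝ) = 2*H - γ by rw [hqdef]; ring]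
    field_simp
    ring
  -- bound B
  have hB : (∫ r in s..t, (τ - r) ^ (-γ) * ((r - s) ^ q / q))
      ≤ (t - s) ^ (2*H - 2*γ) / ((1 - γ) * q) := by
    have hmono : (∫ r in s..t, (τ - r) ^ (-γ) * ((r - s) ^ q / q))
        ≤ ∫ r in s..t, (t - r) ^ (-γ) * ((t - s) ^ q / q) := by
      apply intervalIntegral.integral_mono_ae_restrict hst.le hf_int hgB_int
      have h0 : ∀ᵐ (r : ℝ), r ≠ t := by
        rw [MeasureTheory.ae_iff]
        simp only [ne_eq, not_not, Set.setOf_eq_eq_singleton]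
        exact measure_singleton t
      filter_upwards [MeasureTheory.ae_restrict_of_ae h0,
        MeasureTheory.ae_restrict_mem measurableSet_Icc] with r hrt hr
      have hrlt : r < t := lt_of_le_of_ne hr.2 hrt
      have h1 : (τ - r) ^ (-γ) ≤ (t - r) ^ (-γ) :=
        Real.rpow_le_rpow_of_nonpos (by linarith) (by linarith) (by linarith)
      have h2 : (r - s) ^ q / q ≤ (t - s) ^ q / q := by
        have := Real.rpow_le_rpow (by linarith [hr.1] : (0:ℝ) ≤ r - s)
          (by linarith : r - s ≤ t - s) hq0.le
        exact div_le_div_of_nonneg_right this hq0.le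
      have h3 : (0:ℝ) ≤ (r - s) ^ q / q :=
        div_nonneg (Real.rpow_nonneg (by linarith [hr.1]) _) hq0.le
      have h4 : (0:ℝ) ≤ (t - r) ^ (-γ) := Real.rpow_nonneg (by linarith) _
      calc (τ - r) ^ (-γ) * ((r - s) ^ q / q)
          ≤ (t - r) ^ (-γ) * ((r - s) ^ q / q) := mul_le_mul_of_nonneg_right h1 h3
        _ ≤ (t - r) ^ (-γ) * ((t - s) ^ q / q) := mul_le_mul_of_nonneg_left h2 h4
    refine hmono.trans_eq ?_
    rw [intervalIntegral.integral_mul_const]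
    have := intervalIntegral.integral_comp_sub_left (a := s) (b := t)
      (fun x => x ^ (-γ)) t
    rw [this, sub_self, integral_rpow (Or.inl (by linarith : (-1:ℝ) < -γ)),
      Real.zero_rpow (by linarith : (0:ℝ) < -γ + 1).ne']
    rw [show (t - s) ^ (2*H - 2*γ) = (t - s) ^ (-γ + 1) * (t - s) ^ q by
      rw [← Real.rpow_add hts]; congr 1; rw [hqdef]; ring]
    field_simp
    ring
  -- combine
  rw [mul_min_of_nonneg _ _ hC.le]
  apply le_min
  · refine hA.trans ?_
    have hpos : (0:ℝ) < (τ - t) ^ (-γ) := Real.rpow_pos_of_pos hτt _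
    have hpos2 : (0:ℝ) < (t - s) ^ (2*H - γ) := Real.rpow_pos_of_pos hts _
    rw [show (τ - t) ^ (-γ) * ((t - s) ^ (2*H - γ) / ((2*H - γ) * q))
        = (1/(q*(2*H-γ))) * ((τ - t) ^ (-γ) * (t - s) ^ (2*H - γ)) by ring]
    apply mul_le_mul_of_nonneg_right _ (by positivity)
    have : (0:ℝ) < 1/(q*(1-γ)) := div_pos one_pos hd2
    linarith
  · refine hB.trans ?_
    have hpos2 : (0:ℝ) < (t - s) ^ (2*H - 2*γ) := Real.rpow_pos_of_pos hts _
    rw [show (t - s) ^ (2*H - 2*γ) / ((1 - γ) * q)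
        = (1/(q*(1-γ))) * (t - s) ^ (2*H - 2*γ) by ring]
    apply mul_le_mul_of_nonneg_right _ (by positivity)
    have : (0:ℝ) < 1/(q*(2*H-γ)) := div_pos one_pos hd1
    linarith
end
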